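/- For every platform j, the cost-per-value ratio of the continuous (linearly interpolated) extension is nondecreasing: for all real μ, μ' with 0 < μ ≤ μ' ≤ n, c_j(μ)/v_j(μ) ≤ c_j(μ')/v_j(μ'). -/
import Mathlib


/-- The marginal cost of bid level `μ ≥ 1`:
`MC(μ) = (c(μ) − c(μ−1)) / (v(μ) − v(μ−1))`. -/
noncomputable def MC (c v : ℕ → ℝ) (μ : ℕ) : ℝ :=
  (c μ - c (μ - 1)) / (v μ - v (μ - 1))

/-- Linear interpolation of `f : ℕ → ℝ` to nonnegative reals:
for `⌊x⌋ ≤ x ≤ ⌊x⌋ + 1`,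
`interp f x = (⌈x⌉ − x)·f(⌊x⌋) + (x − ⌊x⌋)·f(⌈x⌉)`. -/
noncomputable def interp (f : ℕ → ℝ) (x : ℝ) : ℝ :=
  f ⌊x⌋₊ + (x - ⌊x⌋₊) * (f (⌊x⌋₊ + 1) - f ⌊x⌋₊)

lemma interp_nat (f : ℕ → ℝ) (k : ℕ) : interp f (k : ℝ) = f k := by
  simp [interp]

lemma interp_seg (f : ℕ → ℝ) (k : ℕ) (x : ℝ) (h1 : (k : ℝ) ≤ x) (h2 : x ≤ (k : ℝ) + 1) :
    interp f x = f k + (x - k) * (f (k + 1) - f k) := by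
  rcases eq_or_lt_of_le h2 with h | h
  · rw [h, show ((k : ℝ) + 1) = ((k + 1 : ℕ) : ℝ) by push_cast; ring, interp_nat]
    push_cast
    ring
  · have hf : ⌊x⌋₊ = k := by
      rw [Nat.floor_eq_iff (le_trans (Nat.cast_nonneg k) h1)]
      exact ⟨h1, by push_cast; linarith⟩
    simp [interp, hf]

lemma v_nonneg (n : ℕ) (v : ℕ → ℝ) (hv0 : v 0 = 0) (hv : ∀ μ < n, v μ < v (μ + 1)) :
    ∀ k ≤ n, 0 ≤ v k := by
  intro k hk
  induction k with
  | zero => simp [hv0]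
  | succ m ih => exact le_of_lt (lt_of_le_of_lt (ih (by omega)) (hv m (by omega)))

lemma v_pos (n : ℕ) (v : ℕ → ℝ) (hv0 : v 0 = 0) (hv : ∀ μ < n, v μ < v (μ + 1)) :
    ∀ k, 1 ≤ k → k ≤ n → 0 < v k := by
  intro k h1 h2
  cases k with
  | zero => omega
  | succ m => exact lt_of_le_of_lt (v_nonneg n v hv0 hv m (by omega)) (hv m (by omega))

/-- Average cost ≤ marginal cost at integer points, in cross-multiplied form. -/
lemma avg_le_marg (n : ℕ) (c v : ℕ → ℝ)
    (hc0 : c 0 = 0) (hv0 : v 0 = 0)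
    (hc : ∀ μ < n, c μ < c (μ + 1)) (hv : ∀ μ < n, v μ < v (μ + 1))
    (hmono : ∀ μ, 1 ≤ μ → μ < n → MC c v μ ≤ MC c v (μ + 1)) :
    ∀ k < n, c k * (v (k + 1) - v k) ≤ (c (k + 1) - c k) * v k := by
  intro k
  induction k with
  | zero => intro _; simp [hc0, hv0]
  | succ m ih =>
    intro hm
    have ihm := ih (by omega)
    have hmc := hmono (m + 1) (by omega) hm
    have hΔv1 : 0 < v (m + 1) - v m := sub_pos.2 (hv m (by omega))
    have hΔv2 : 0 < v (m + 2) - v (m + 1) := sub_pos.2 (hv (m + 1) hm)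
    have hcm : 0 ≤ c m := v_nonneg n c hc0 hc m (by omega)
    have hvm : 0 ≤ v m := v_nonneg n v hv0 hv m (by omega)
    simp only [MC, Nat.add_sub_cancel] at hmc
    rw [div_le_div_iff₀ hΔv1 hΔv2] at hmc
    nlinarith [mul_le_mul_of_nonneg_right ihm hΔv2.le,
      mul_le_mul_of_nonneg_right hmc hvm, mul_pos hΔv1 hΔv2]

/-- Monotonicity of the ratio within one segment `[k, k+1]`. -/
lemma seg_mono (n : ℕ) (c v : ℕ → ℝ)
    (hc0 : c 0 = 0) (hv0 : v 0 = 0)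
    (hc : ∀ μ < n, c μ < c (μ + 1)) (hv : ∀ μ < n, v μ < v (μ + 1))
    (hmono : ∀ μ, 1 ≤ μ → μ < n → MC c v μ ≤ MC c v (μ + 1))
    (k : ℕ) (hk : k < n) (x y : ℝ)
    (hkx : (k : ℝ) ≤ x) (hxy : x ≤ y) (hyk : y ≤ (k : ℝ) + 1) (hx0 : 0 < x) :
    interp c x / interp v x ≤ interp c y / interp v y := by
  rw [interp_seg c k x hkx (hxy.trans hyk), interp_seg c k y (hkx.trans hxy) hyk,
      interp_seg v k x hkx (hxy.trans hyk), interp_seg v k y (hkx.trans hxy) hyk]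
  have hΔv : 0 < v (k + 1) - v k := sub_pos.2 (hv k hk)
  have hvk : 0 ≤ v k := v_nonneg n v hv0 hv k hk.le
  have hst : x - k ≤ y - k := by linarith
  have hVx : 0 < v k + (x - k) * (v (k + 1) - v k) := by
    rcases Nat.eq_zero_or_pos k with h0 | h0
    · have hs : 0 < x - (k : ℝ) := by
        rw [h0]; push_cast; linarith
      have := mul_pos hs hΔv
      linarith
    · have := v_pos n v hv0 hv k h0 hk.le
      have := mul_nonneg (by linarith : (0:ℝ) ≤ x - k) hΔv.le
      linarith
  have hVy : 0 < v k + (y - k) * (v (k + 1) - v k) := by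
    have : (x - k) * (v (k + 1) - v k) ≤ (y - k) * (v (k + 1) - v k) :=
      mul_le_mul_of_nonneg_right hst hΔv.le
    linarith
  rw [div_le_div_iff₀ hVx hVy]
  have key := avg_le_marg n c v hc0 hv0 hc hv hmono k hk
  nlinarith [mul_nonneg (by linarith : (0:ℝ) ≤ y - x)
    (by linarith : (0:ℝ) ≤ (c (k + 1) - c k) * v k - c k * (v (k + 1) - v k))]

/-- Monotonicity of the ratio along integer points. -/
lemma chain (n : ℕ) (c v : ℕ → ℝ)
    (hc0 : c 0 = 0) (hv0 : v 0 = 0)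
    (hc : ∀ μ < n, c μ < c (μ + 1)) (hv : ∀ μ < n, v μ < v (μ + 1))
    (hmono : ∀ μ, 1 ≤ μ → μ < n → MC c v μ ≤ MC c v (μ + 1))
    (k l : ℕ) (hk1 : 1 ≤ k) (hkl : k ≤ l) (hl : l ≤ n) :
    c k / v k ≤ c l / v l := by
  induction l, hkl using Nat.le_induction with
  | base => exact le_rfl
  | succ m hm ih =>
    refine (ih (by omega)).trans ?_
    have h := seg_mono n c v hc0 hv0 hc hv hmono m (by omega) (m : ℝ) ((m : ℝ) + 1)
      le_rfl (by linarith) le_rfl (by exact_mod_cast show 0 < m by omega)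
    rwa [interp_nat, interp_nat,
      show ((m : ℝ) + 1) = ((m + 1 : ℕ) : ℝ) by push_cast; ring,
      interp_nat, interp_nat] at h

/-- The cost-per-value ratio of the continuous (linearly interpolated)
extension is nondecreasing: for `0 < μ ≤ μ' ≤ n`,
`c(μ)/v(μ) ≤ c(μ')/v(μ')`. -/
theorem interp_cost_per_value_monotone
    (n : ℕ) (c v : ℕ → ℝ)
    (hc0 : c 0 = 0) (hv0 : v 0 = 0)
    (hc : ∀ μ < n, c μ < c (μ + 1)) (hv : ∀ μ < n, v μ < v (μ + 1))
    (hmono : ∀ μ, 1 ≤ μ → μ < n → MC c v μ ≤ MC c v (μ + 1))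
    (x y : ℝ) (hx : 0 < x) (hxy : x ≤ y) (hy : y ≤ n) :
    interp c x / interp v x ≤ interp c y / interp v y := by
  rcases eq_or_lt_of_le hxy with rfl | hlt
  · exact le_rfl
  have hxn : x < n := lt_of_lt_of_le hlt hy
  have hfx : (⌊x⌋₊ : ℝ) ≤ x := Nat.floor_le hx.le
  have hfxn : ⌊x⌋₊ < n := by exact_mod_cast lt_of_le_of_lt hfx hxn
  by_cases hcase : y ≤ (⌊x⌋₊ : ℝ) + 1
  · exact seg_mono n c v hc0 hv0 hc hv hmono ⌊x⌋₊ hfxn x y hfx hxy hcase hx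
  push_neg at hcase
  have h1 : interp c x / interp v x ≤
      interp c ((⌊x⌋₊ : ℝ) + 1) / interp v ((⌊x⌋₊ : ℝ) + 1) :=
    seg_mono n c v hc0 hv0 hc hv hmono ⌊x⌋₊ hfxn x ((⌊x⌋₊ : ℝ) + 1) hfx
      (le_of_lt (Nat.lt_floor_add_one x)) le_rfl hx
  have hbn : ⌊y⌋₊ ≤ n := by
    have := Nat.floor_le_floor hy
    simpa using this
  have hab : ⌊x⌋₊ + 1 ≤ ⌊y⌋₊ := Nat.le_floor (by push_cast; linarith)
  have h2 : c (⌊x⌋₊ + 1) / v (⌊x⌋₊ + 1) ≤ c ⌊y⌋₊ / v ⌊y⌋₊ :=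
    chain n c v hc0 hv0 hc hv hmono (⌊x⌋₊ + 1) ⌊y⌋₊ (by omega) hab hbn
  have h3 : c ⌊y⌋₊ / v ⌊y⌋₊ ≤ interp c y / interp v y := by
    rcases eq_or_lt_of_le (Nat.floor_le (le_trans hx.le hxy)) with heq | hlt2
    · rw [← heq, interp_nat, interp_nat, Nat.floor_natCast]
    · have hbn' : ⌊y⌋₊ < n := by
        exact_mod_cast lt_of_lt_of_le hlt2 hy
      have h := seg_mono n c v hc0 hv0 hc hv hmono ⌊y⌋₊ hbn' ((⌊y⌋₊ : ℝ)) y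
        le_rfl hlt2.le (le_of_lt (Nat.lt_floor_add_one y))
        (by exact_mod_cast show 0 < ⌊y⌋₊ by omega)
      rwa [interp_nat, interp_nat] at h
  calc interp c x / interp v x ≤ _ := h1
    _ = c (⌊x⌋₊ + 1) / v (⌊x⌋₊ + 1) := by
        rw [show ((⌊x⌋₊ : ℝ) + 1) = ((⌊x⌋₊ + 1 : ℕ) : ℝ) by push_cast; ring,
          interp_nat, interp_nat]
    _ ≤ c ⌊y⌋₊ / v ⌊y⌋₊ := h2
    _ ≤ _ := h3
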